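/- For all integers P ≥ 2, m ≥ 1, c ≥ 1, with parameters L = 0 and any real g > P·(P·c + 1), the minimum cost of a valid non-replicating BSP schedule of the DAG D(P, m, c) with P processors (over all numbers of supersteps S ≥ 1) is at least ((P·c + 1)/(c + 1)) times the minimum cost of a valid BSP schedule of D(P, m, c) with P processors (over all S ≥ 1); consequently, allowing replication reduces the optimal BSP cost of D(P, m, c) by a factor of at least (P·c + 1)/(c + 1). -/

import Mathlib

open Finset

/-- A BSP schedule on node set `V` with `P` processors and `S` supersteps: computation sets
`V_{p,s} ⊆ V` and communication sets `Γ_{p,s} ⊆ V × {1,…,P}`. -/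
structure BSPSchedule (V : Type*) (P S : ℕ) where
  comp : Fin P → Fin S → Finset V
  comm : Fin P → Fin S → Finset (V × Fin P)

namespace BSPSchedule

variable {V : Type*} {P S : ℕ}

/-- A node `v` is present on processor `p` in superstep `s` if `v ∈ V_{p,s'}` for some
`s' ≤ s`, or `(v, p) ∈ Γ_{p',s'}` for some `s' < s` and some `p' ≠ p`. -/
def present (sch : BSPSchedule V P S) (v : V) (p : Fin P) (s : Fin S) : Prop :=
  (∃ s' ≤ s, v ∈ sch.comp p s') ∨
  (∃ s' < s, ∃ p', p' ≠ p ∧ (v, p) ∈ sch.comm p' s')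

/-- Validity of a BSP schedule for the DAG with edge relation `E`:
(i) for every `v ∈ V_{p,s}`, every in-neighbor of `v` is present on `p` in superstep `s`;
(ii) for every `(v, p') ∈ Γ_{p,s}`, `v` is present on `p` in superstep `s`;
(iii) every node lies in some computation set. -/
def Valid (E : V → V → Prop) (sch : BSPSchedule V P S) : Prop :=
  (∀ p s, ∀ v ∈ sch.comp p s, ∀ u, E u v → sch.present u p s) ∧
  (∀ p s, ∀ x ∈ sch.comm p s, sch.present x.1 p s) ∧
  (∀ v : V, ∃ p s, v ∈ sch.comp p s)

/-- The set `Γ'_{p,s} = {(v, p') : (v, p) ∈ Γ_{p',s}}` of values received by `p` in `s`. -/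
def received [Fintype V] [DecidableEq V] (sch : BSPSchedule V P S)
    (p : Fin P) (s : Fin S) : Finset (V × Fin P) :=
  Finset.univ.filter (fun x => (x.1, p) ∈ sch.comm x.2 s)

/-- The BSP cost
`Σ_s ( max_p |V_{p,s}| + L + g · max_p max(|Γ_{p,s}|, |Γ'_{p,s}|) )`. -/
def cost [Fintype V] [DecidableEq V] (sch : BSPSchedule V P S) (g L : ℝ) : ℝ :=
  ∑ s : Fin S,
    (((Finset.univ.sup fun p => (sch.comp p s).card : ℕ) : ℝ) + L +
      g * ((Finset.univ.sup fun p =>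
        max (sch.comm p s).card (sch.received p s).card : ℕ) : ℝ))

/-- A schedule is non-replicating if the computation sets are pairwise disjoint. -/
def NonReplicating (sch : BSPSchedule V P S) : Prop :=
  ∀ p s p' s', (p, s) ≠ (p', s') → Disjoint (sch.comp p s) (sch.comp p' s')

end BSPSchedule

/-- The node set of the DAG `D(P, m, c)`: the disjoint union of a set `U` with `|U| = m`
(the left summand) and sets `U_1, …, U_P` each with `|U_i| = c·m` (the right summand, where
`U_p = {p} × Fin (c·m)`). -/
abbrev DNode (P m c : ℕ) := Fin m ⊕ (Fin P × Fin (c * m))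

/-- The edge relation of the DAG `D(P, m, c)`: exactly the pairs `(u, w)` for every `u ∈ U`
and every `w ∈ U_1 ∪ … ∪ U_P`. -/
def DEdge (P m c : ℕ) : DNode P m c → DNode P m c → Prop :=
  fun x y => x.isLeft = true ∧ y.isRight = true


section Aux

open BSPSchedule

variable {P m c : ℕ}

/-- Any BSP cost with `L = 0` and `g ≥ 0` is nonnegative. -/
lemma cost_nonneg {S : ℕ} (sch : BSPSchedule (DNode P m c) P S) {g : ℝ} (hg : 0 ≤ g) :
    0 ≤ sch.cost g 0 := by
  unfold BSPSchedule.cost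
  apply Finset.sum_nonneg
  intro s _
  have h1 : (0:ℝ) ≤ ((Finset.univ.sup fun p => (sch.comp p s).card : ℕ) : ℝ) :=
    Nat.cast_nonneg _
  have h2 : (0:ℝ) ≤ ((Finset.univ.sup fun p =>
      max (sch.comm p s).card (sch.received p s).card : ℕ) : ℝ) := Nat.cast_nonneg _
  nlinarith

/-- The fully replicated one-superstep schedule: every processor computes all of `U` and
its own `U_p`. -/
def repSched (P m c : ℕ) : BSPSchedule (DNode P m c) P 1 where
  comp p _ := (Finset.univ.map ⟨Sum.inl, Sum.inl_injective⟩) ∪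
    (Finset.univ.map ⟨fun j => Sum.inr (p, j), fun a b h => by simpa using h⟩)
  comm _ _ := ∅

lemma repSched_valid (hP : 0 < P) : (repSched P m c).Valid (DEdge P m c) := by
  refine ⟨?_, ?_, ?_⟩
  · intro p s v _ u hu
    obtain ⟨hl, _⟩ := hu
    obtain ⟨a, rfl⟩ : ∃ a, u = Sum.inl a := by
      cases u with
      | inl a => exact ⟨a, rfl⟩
      | inr b => simp at hl
    exact Or.inl ⟨s, le_refl s, by simp [repSched]⟩
  · intro p s x hx
    simp [repSched] at hx
  · intro v
    cases v with
    | inl a => exact ⟨⟨0, hP⟩, 0, by simp [repSched]⟩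
    | inr w => exact ⟨w.1, 0, by simp [repSched]; exact ⟨w.2, rfl⟩⟩

lemma repSched_cost (hP : 0 < P) (g : ℝ) (hg : 0 ≤ g) :
    (repSched P m c).cost g 0 ≤ (((c + 1) * m : ℕ) : ℝ) := by
  unfold BSPSchedule.cost
  rw [Fin.sum_univ_one]
  have h2 : (Finset.univ.sup fun p =>
      max ((repSched P m c).comm p 0).card ((repSched P m c).received p 0).card) = 0 := by
    refine le_antisymm (Finset.sup_le fun p _ => ?_) (Nat.zero_le _)
    simp [repSched, BSPSchedule.received]
  have h1 : (Finset.univ.sup fun p => ((repSched P m c).comp p 0).card) ≤ (c + 1) * m := by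
    refine Finset.sup_le fun p _ => ?_
    refine le_trans (Finset.card_union_le _ _) ?_
    simp only [Finset.card_map, Finset.card_univ, Fintype.card_fin]
    ring_nf
    omega
  rw [h2]
  push_cast
  have := (Nat.cast_le (α := ℝ)).mpr h1
  push_cast at this
  linarith

/-- The sequential one-superstep schedule: processor 0 computes everything. -/
def nrSched (P m c : ℕ) (hP : 0 < P) : BSPSchedule (DNode P m c) P 1 where
  comp p _ := if p = ⟨0, hP⟩ then Finset.univ else ∅
  comm _ _ := ∅

lemma nrSched_valid (hP : 0 < P) : (nrSched P m c hP).Valid (DEdge P m c) := by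
  refine ⟨?_, ?_, ?_⟩
  · intro p s v hv u _
    by_cases h : p = ⟨0, hP⟩
    · exact Or.inl ⟨s, le_refl s, by simp [nrSched, h]⟩
    · simp [nrSched, h] at hv
  · intro p s x hx
    simp [nrSched] at hx
  · intro v
    exact ⟨⟨0, hP⟩, 0, by simp [nrSched]⟩

lemma nrSched_nr (hP : 0 < P) : (nrSched P m c hP).NonReplicating := by
  intro p s p' s' hne
  have hss : s = s' := Subsingleton.elim s s'
  have hpp : p ≠ p' := by
    intro h
    exact hne (by rw [h, hss])
  by_cases h : p = ⟨0, hP⟩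
  · have h' : p' ≠ ⟨0, hP⟩ := fun hh => hpp (h.trans hh.symm)
    simp [nrSched, h, h']
  · simp [nrSched, h]

/-- Lower bound: every valid non-replicating schedule costs at least `(P·c+1)·m`. -/
lemma nr_lower (hP : 2 ≤ P) (hm : 1 ≤ m) (hc : 1 ≤ c) (g : ℝ)
    (hg : ((P * (P * c + 1) : ℕ) : ℝ) < g) (S : ℕ) (hS : 1 ≤ S)
    (sch : BSPSchedule (DNode P m c) P S) (hval : sch.Valid (DEdge P m c))
    (hnr : sch.NonReplicating) :
    (((P * c + 1) * m : ℕ) : ℝ) ≤ sch.cost g 0 := by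
  classical
  set Work : ℕ := ∑ s, Finset.univ.sup fun p => (sch.comp p s).card with hWdef
  set Comm : ℕ := ∑ s, Finset.univ.sup fun p =>
    max (sch.comm p s).card (sch.received p s).card with hCdef
  have hcost : sch.cost g 0 = (Work : ℝ) + g * (Comm : ℝ) := by
    rw [hWdef, hCdef]
    simp only [BSPSchedule.cost, add_zero]
    push_cast
    rw [Finset.sum_add_distrib, Finset.mul_sum]
  have huniq : ∀ (u : Fin m) (p p' : Fin P) (s s' : Fin S),
      Sum.inl u ∈ sch.comp p s → Sum.inl u ∈ sch.comp p' s' → p = p' := by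
    intro u p p' s s' h h'
    by_contra hne
    exact (Finset.disjoint_left.mp (hnr p s p' s' (by simp [hne])) h) h'
  set R : Finset (Fin P) := Finset.univ.filter
      (fun p => ∃ s w, Sum.inr w ∈ sch.comp p s) with hRdef
  set N : Finset (Fin m × Fin P) := Finset.univ.filter
      (fun y => y.2 ∈ R ∧ ¬ ∃ s, Sum.inl y.1 ∈ sch.comp y.2 s) with hNdef
  have hcommw : ∀ y ∈ N, ∃ (s' : Fin S) (p' : Fin P),
      p' ≠ y.2 ∧ (Sum.inl y.1, y.2) ∈ sch.comm p' s' := by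
    intro y hy
    rw [hNdef, Finset.mem_filter] at hy
    obtain ⟨-, hyR, hnot⟩ := hy
    rw [hRdef, Finset.mem_filter] at hyR
    obtain ⟨-, s, w, hw⟩ := hyR
    have hpres := hval.1 y.2 s _ hw (Sum.inl y.1) ⟨rfl, rfl⟩
    rcases hpres with ⟨s', _, hmem⟩ | ⟨s', _, p', hp', hmem⟩
    · exact absurd ⟨s', hmem⟩ hnot
    · exact ⟨s', p', hp', hmem⟩
  have hNT : N.card ≤ ∑ s, ∑ p, (sch.received p s).card := by
    set T : Finset (Fin S × Fin P × DNode P m c × Fin P) :=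
      Finset.univ.filter (fun x => (x.2.2.1, x.2.1) ∈ sch.comm x.2.2.2 x.1) with hTdef
    have hT : T.card = ∑ s, ∑ p, (sch.received p s).card := by
      rw [hTdef, Finset.card_filter, Fintype.sum_prod_type]
      refine Finset.sum_congr rfl fun s _ => ?_
      rw [Fintype.sum_prod_type]
      refine Finset.sum_congr rfl fun p _ => ?_
      rw [BSPSchedule.received, Finset.card_filter]
    rw [← hT]
    refine Finset.card_le_card_of_injOn
      (fun y => if h : ∃ (s' : Fin S) (p' : Fin P),
          p' ≠ y.2 ∧ (Sum.inl y.1, y.2) ∈ sch.comm p' s'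
        then (h.choose, y.2, Sum.inl y.1, h.choose_spec.choose)
        else (⟨0, hS⟩, y.2, Sum.inl y.1, y.2)) ?_ ?_
    · intro y hy
      have h := hcommw y hy
      simp only [dif_pos h]
      have hspec := h.choose_spec.choose_spec
      rw [hTdef]
      simp only [Finset.mem_coe, Finset.mem_filter, Finset.mem_univ, true_and]
      exact hspec.2
    · intro y hy z hz heq
      have h1 := hcommw y hy
      have h2 := hcommw z hz
      simp only [dif_pos h1, dif_pos h2, Prod.mk.injEq] at heq
      obtain ⟨-, h21, h221, -⟩ := heq
      exact Prod.ext (Sum.inl_injective h221) h21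
  have hNC : N.card ≤ P * Comm := by
    calc N.card ≤ ∑ s, ∑ p, (sch.received p s).card := hNT
      _ ≤ ∑ s, P * (Finset.univ.sup fun p =>
            max (sch.comm p s).card (sch.received p s).card) := by
          refine Finset.sum_le_sum fun s _ => ?_
          calc ∑ p, (sch.received p s).card
              ≤ ∑ _p : Fin P, (Finset.univ.sup fun p =>
                  max (sch.comm p s).card (sch.received p s).card) :=
                Finset.sum_le_sum fun p _ =>
                  le_trans (le_max_right _ _)
                    (Finset.le_sup (f := fun p =>
                      max (sch.comm p s).card (sch.received p s).card)
                      (Finset.mem_univ p))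
            _ = _ := by rw [Finset.sum_const, Finset.card_univ, Fintype.card_fin,
                  smul_eq_mul]
      _ = P * Comm := by rw [hCdef, Finset.mul_sum]
  by_cases hbig : m ≤ N.card
  · -- communication-heavy case
    have hm' : m ≤ P * Comm := le_trans hbig hNC
    have hnat : (P * c + 1) * m ≤ (P * (P * c + 1)) * Comm := by
      calc (P * c + 1) * m ≤ (P * c + 1) * (P * Comm) := Nat.mul_le_mul_left _ hm'
        _ = (P * (P * c + 1)) * Comm := by ring
    have hCpos : 0 < Comm := by
      rcases Nat.eq_zero_or_pos Comm with h | h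
      · rw [h, Nat.mul_zero] at hm'; omega
      · exact h
    have hr1 : (((P * c + 1) * m : ℕ) : ℝ) ≤ ((P * (P * c + 1) : ℕ) : ℝ) * (Comm : ℝ) := by
      have := (Nat.cast_le (α := ℝ)).mpr hnat
      push_cast at this ⊢
      linarith
    have hr2 : ((P * (P * c + 1) : ℕ) : ℝ) * (Comm : ℝ) ≤ g * Comm :=
      mul_le_mul_of_nonneg_right hg.le (Nat.cast_nonneg _)
    have hW0 : (0:ℝ) ≤ (Work : ℝ) := Nat.cast_nonneg _
    rw [hcost]
    linarith
  · push_neg at hbig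
    have hw0 : (0 : ℕ) < c * m := Nat.mul_pos (by omega) (by omega)
    obtain ⟨p0, s0, hws⟩ := hval.2.2 (Sum.inr (⟨0, by omega⟩, ⟨0, hw0⟩))
    have hp0R : p0 ∈ R := by
      rw [hRdef]
      exact Finset.mem_filter.mpr ⟨Finset.mem_univ _, s0, _, hws⟩
    have hRuniq : ∀ p ∈ R, p = p0 := by
      intro p1 hp1
      by_contra hne
      have hinj : (Finset.univ : Finset (Fin m)).card ≤ N.card := by
        refine Finset.card_le_card_of_injOn
          (fun u => if ∃ s, Sum.inl u ∈ sch.comp p0 s then (u, p1) else (u, p0)) ?_ ?_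
        · intro u _
          dsimp only
          by_cases h : ∃ s, Sum.inl u ∈ sch.comp p0 s
          · rw [if_pos h, hNdef]
            refine Finset.mem_filter.mpr ⟨Finset.mem_univ _, hp1, ?_⟩
            rintro ⟨s', hs'⟩
            obtain ⟨s, hs⟩ := h
            exact hne (huniq u p1 p0 s' s hs' hs)
          · rw [if_neg h, hNdef]
            exact Finset.mem_filter.mpr ⟨Finset.mem_univ _, hp0R, h⟩
        · intro a _ b _ heq
          dsimp only at heq
          split_ifs at heq <;> simp only [Prod.mk.injEq] at heq <;>
            first
              | exact heq.1
              | exact absurd heq.2 hne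
              | exact absurd heq.2.symm hne
      rw [Finset.card_univ, Fintype.card_fin] at hinj
      omega
    have hrights : ∀ w : Fin P × Fin (c * m), ∃ s, Sum.inr w ∈ sch.comp p0 s := by
      intro w
      obtain ⟨p, s, h⟩ := hval.2.2 (Sum.inr w)
      have hpR : p ∈ R := by
        rw [hRdef]
        exact Finset.mem_filter.mpr ⟨Finset.mem_univ _, s, w, h⟩
      rw [hRuniq p hpR] at h
      exact ⟨s, h⟩
    set K : Finset (Fin m) := Finset.univ.filter
        (fun u => ∃ s, Sum.inl u ∈ sch.comp p0 s) with hKdef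
    have hA : P * (c * m) + K.card ≤ Work := by
      have hdisj : Disjoint
          ((Finset.univ : Finset (Fin P × Fin (c * m))).map ⟨Sum.inr, Sum.inr_injective⟩)
          (K.map ⟨Sum.inl, Sum.inl_injective⟩) := by
        rw [Finset.disjoint_left]
        rintro x hx hx'
        obtain ⟨w, -, rfl⟩ := Finset.mem_map.mp hx
        obtain ⟨u, -, h⟩ := Finset.mem_map.mp hx'
        simp at h
      have hsub : ((Finset.univ : Finset (Fin P × Fin (c * m))).map
            ⟨Sum.inr, Sum.inr_injective⟩ ∪ K.map ⟨Sum.inl, Sum.inl_injective⟩ :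
            Finset (DNode P m c)) ⊆
          Finset.univ.biUnion (fun s : Fin S => sch.comp p0 s) := by
        intro v hv
        rw [Finset.mem_union] at hv
        rcases hv with hv | hv
        · obtain ⟨w, -, rfl⟩ := Finset.mem_map.mp hv
          obtain ⟨s, hs⟩ := hrights w
          exact Finset.mem_biUnion.mpr ⟨s, Finset.mem_univ _, hs⟩
        · obtain ⟨u, hu, rfl⟩ := Finset.mem_map.mp hv
          obtain ⟨s, hs⟩ := (Finset.mem_filter.mp hu).2
          exact Finset.mem_biUnion.mpr ⟨s, Finset.mem_univ _, hs⟩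
      have hcard1 : P * (c * m) + K.card =
          ((Finset.univ : Finset (Fin P × Fin (c * m))).map ⟨Sum.inr, Sum.inr_injective⟩ ∪
            K.map ⟨Sum.inl, Sum.inl_injective⟩ : Finset (DNode P m c)).card := by
        rw [Finset.card_union_of_disjoint hdisj]
        simp [Fintype.card_prod]
      calc P * (c * m) + K.card = _ := hcard1
        _ ≤ (Finset.univ.biUnion fun s => sch.comp p0 s).card := Finset.card_le_card hsub
        _ ≤ ∑ s, (sch.comp p0 s).card := Finset.card_biUnion_le
        _ ≤ Work := Finset.sum_le_sum fun s _ =>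
            Finset.le_sup (f := fun p => (sch.comp p s).card) (Finset.mem_univ p0)
    have hKN : m ≤ K.card + N.card := by
      have hsub2 : (Finset.univ.filter
          (fun u : Fin m => ¬ ∃ s, Sum.inl u ∈ sch.comp p0 s)).card ≤ N.card := by
        refine Finset.card_le_card_of_injOn (fun u => (u, p0)) ?_ ?_
        · intro u hu
          rw [Finset.mem_coe, Finset.mem_filter] at hu
          rw [hNdef]
          exact Finset.mem_filter.mpr ⟨Finset.mem_univ _, hp0R, hu.2⟩
        · intro a _ b _ h
          exact congrArg Prod.fst h
      have hsplit := Finset.card_filter_add_card_filter_not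
        (s := (Finset.univ : Finset (Fin m)))
        (p := fun u => ∃ s, Sum.inl u ∈ sch.comp p0 s)
      rw [Finset.card_univ, Fintype.card_fin] at hsplit
      rw [hKdef]
      omega
    have hgP : (P : ℝ) ≤ g := by
      have h1 : P ≤ P * (P * c + 1) := Nat.le_mul_of_pos_right _ (by omega)
      have h2 : ((P : ℕ) : ℝ) ≤ ((P * (P * c + 1) : ℕ) : ℝ) := Nat.cast_le.mpr h1
      linarith
    have h5 : (N.card : ℝ) ≤ g * Comm := by
      calc (N.card : ℝ) ≤ (P : ℝ) * Comm := by exact_mod_cast hNC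
        _ ≤ g * Comm := mul_le_mul_of_nonneg_right hgP (Nat.cast_nonneg _)
    have hA' : (P : ℝ) * (c * m) + K.card ≤ (Work : ℝ) := by exact_mod_cast hA
    have hKN' : (m : ℝ) ≤ (K.card : ℝ) + N.card := by exact_mod_cast hKN
    rw [hcost]
    push_cast
    nlinarith [h5, hA', hKN']

end Aux

/-- For all integers `P ≥ 2`, `m ≥ 1`, `c ≥ 1`, with parameters `L = 0` and any
real `g > P·(P·c + 1)`, the minimum cost of a valid non-replicating BSP schedule of the DAG
`D(P, m, c)` with `P` processors (over all numbers of supersteps `S ≥ 1`) is at least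
`((P·c + 1)/(c + 1))` times the minimum cost of a valid BSP schedule of `D(P, m, c)` with `P`
processors (over all `S ≥ 1`); consequently, allowing replication reduces the optimal BSP cost
of `D(P, m, c)` by a factor of at least `(P·c + 1)/(c + 1)`. -/
theorem stmt14 (P m c : ℕ) (hP : 2 ≤ P) (hm : 1 ≤ m) (hc : 1 ≤ c)
    (g : ℝ) (hg : ((P * (P * c + 1) : ℕ) : ℝ) < g) :
    (((P * c + 1 : ℕ) : ℝ) / ((c + 1 : ℕ) : ℝ)) *
      sInf {x : ℝ | ∃ S : ℕ, 1 ≤ S ∧ ∃ sch : BSPSchedule (DNode P m c) P S,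
        sch.Valid (DEdge P m c) ∧ sch.cost g 0 = x} ≤
    sInf {x : ℝ | ∃ S : ℕ, 1 ≤ S ∧ ∃ sch : BSPSchedule (DNode P m c) P S,
      sch.Valid (DEdge P m c) ∧ sch.NonReplicating ∧ sch.cost g 0 = x} := by
  classical
  have hg0 : (0:ℝ) ≤ g := le_trans (Nat.cast_nonneg _) hg.le
  have hP0 : 0 < P := by omega
  have hBne : {x : ℝ | ∃ S : ℕ, 1 ≤ S ∧ ∃ sch : BSPSchedule (DNode P m c) P S,
      sch.Valid (DEdge P m c) ∧ sch.NonReplicating ∧ sch.cost g 0 = x}.Nonempty :=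
    ⟨(nrSched P m c hP0).cost g 0, 1, le_refl 1, nrSched P m c hP0,
      nrSched_valid hP0, nrSched_nr hP0, rfl⟩
  have hlow : (((P * c + 1) * m : ℕ) : ℝ) ≤
      sInf {x : ℝ | ∃ S : ℕ, 1 ≤ S ∧ ∃ sch : BSPSchedule (DNode P m c) P S,
        sch.Valid (DEdge P m c) ∧ sch.NonReplicating ∧ sch.cost g 0 = x} := by
    refine le_csInf hBne ?_
    rintro x ⟨S, hS, sch, hv, hnr, rfl⟩
    exact nr_lower hP hm hc g hg S hS sch hv hnr
  have hup : sInf {x : ℝ | ∃ S : ℕ, 1 ≤ S ∧ ∃ sch : BSPSchedule (DNode P m c) P S,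
      sch.Valid (DEdge P m c) ∧ sch.cost g 0 = x} ≤ (((c + 1) * m : ℕ) : ℝ) := by
    have hbdd : BddBelow {x : ℝ | ∃ S : ℕ, 1 ≤ S ∧ ∃ sch : BSPSchedule (DNode P m c) P S,
        sch.Valid (DEdge P m c) ∧ sch.cost g 0 = x} := by
      refine ⟨0, ?_⟩
      rintro x ⟨S, hS, sch, hv, rfl⟩
      exact cost_nonneg sch hg0
    refine le_trans (csInf_le hbdd ?_) (repSched_cost hP0 g hg0)
    exact ⟨1, le_refl 1, repSched P m c, repSched_valid hP0, rfl⟩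
  have hratio : (0:ℝ) ≤ ((P * c + 1 : ℕ) : ℝ) / ((c + 1 : ℕ) : ℝ) := by positivity
  have hc1 : ((c + 1 : ℕ) : ℝ) ≠ 0 := by positivity
  calc ((P * c + 1 : ℕ) : ℝ) / ((c + 1 : ℕ) : ℝ) *
        sInf {x : ℝ | ∃ S : ℕ, 1 ≤ S ∧ ∃ sch : BSPSchedule (DNode P m c) P S,
          sch.Valid (DEdge P m c) ∧ sch.cost g 0 = x}
      ≤ ((P * c + 1 : ℕ) : ℝ) / ((c + 1 : ℕ) : ℝ) * (((c + 1) * m : ℕ) : ℝ) :=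
        mul_le_mul_of_nonneg_left hup hratio
    _ = (((P * c + 1) * m : ℕ) : ℝ) := by
        field_simp
        push_cast
        ring
    _ ≤ _ := hlow
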